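/- Let X be a d-regular simple graph with d odd. Then X is class I (i.e., χ'(X) = d) if and only if the complete truncation of X is class I (i.e., has chromatic index d). -/

import Mathlib

open SimpleGraph

/-- A proper edge coloring of a simple graph: distinct edges sharing a vertex
receive distinct colors. -/
def IsProperEdgeColoring {V α : Type*} (G : SimpleGraph V) (C : Sym2 V → α) : Prop :=
  ∀ e₁ ∈ G.edgeSet, ∀ e₂ ∈ G.edgeSet, e₁ ≠ e₂ → (∃ v, v ∈ e₁ ∧ v ∈ e₂) → C e₁ ≠ C e₂

/-- The chromatic index: least number of colors admitting a proper edge coloring. -/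
noncomputable def chromIndex {V : Type*} (G : SimpleGraph V) : ℕ :=
  sInf {k | ∃ C : Sym2 V → Fin k, IsProperEdgeColoring G C}

/-- Degree of a vertex. -/
noncomputable def deg {V : Type*} (G : SimpleGraph V) (v : V) : ℕ :=
  (G.neighborSet v).ncard

/-- Maximum degree. -/
noncomputable def maxDeg {V : Type*} (G : SimpleGraph V) : ℕ :=
  sSup (Set.range (deg G))

/-- A graph is class I if its chromatic index equals its maximum degree. -/
def ClassI {V : Type*} (G : SimpleGraph V) : Prop := chromIndex G = maxDeg G

/-- The sun over `G`: attach one pendant edge at each vertex of `G`. -/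
def sun {V : Type*} (G : SimpleGraph V) : SimpleGraph (V ⊕ V) :=
  SimpleGraph.fromRel (fun x y =>
    (∃ u v, G.Adj u v ∧ x = Sum.inl u ∧ y = Sum.inl v) ∨
    (∃ v, x = Sum.inl v ∧ y = Sum.inr v))

/-- The pendant edge of the sun attached at vertex `v`. -/
def pendant {V : Type*} (v : V) : Sym2 (V ⊕ V) := s(Sum.inl v, Sum.inr v)

/-- The generalized truncation of `X` determined by the graph `H` on the darts of `X`:
each dart is joined to its reverse dart (the matching `M_F`) and the edges of `H`
(the constituent edges) are added. -/
def trunc {V : Type*} (X : SimpleGraph V) (H : SimpleGraph X.Dart) : SimpleGraph X.Dart :=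
  SimpleGraph.fromRel (fun d d' => d' = d.symm ∨ H.Adj d d')

/-- The constituent graph `H` respects clusters: its edges join only darts with the
same initial vertex. -/
def RespectsClusters {V : Type*} (X : SimpleGraph V) (H : SimpleGraph X.Dart) : Prop :=
  ∀ d d' : X.Dart, H.Adj d d' → d.toProd.1 = d'.toProd.1

/-- The cluster at `v`: darts with initial vertex `v`. -/
def cluster {V : Type*} (X : SimpleGraph V) (v : V) : Set X.Dart :=
  {d : X.Dart | d.toProd.1 = v}

/-- The constituent at `v`, as a graph in its own right. -/
def constituent {V : Type*} (X : SimpleGraph V) (H : SimpleGraph X.Dart) (v : V) :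
    SimpleGraph (cluster X v) := H.induce (cluster X v)

/-- The complete truncation: every constituent is the complete graph on its cluster. -/
def completeTrunc {V : Type*} (X : SimpleGraph V) : SimpleGraph X.Dart :=
  trunc X (SimpleGraph.fromRel (fun d d' => d.toProd.1 = d'.toProd.1))

/-- `X` has no isolated vertices. -/
def NoIsolated {V : Type*} (X : SimpleGraph V) : Prop := ∀ v : V, ∃ w, X.Adj v w

/-- The number of edges of `X` of color `k` incident with `v`. -/
noncomputable def colorCountAt {V α : Type*} (X : SimpleGraph V) (c : Sym2 V → α)
    (v : V) (k : α) : ℕ :=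
  {e | e ∈ X.edgeSet ∧ v ∈ e ∧ c e = k}.ncard

/-- An edge coloring (not necessarily proper) is parity-balanced if for every vertex `v`
and every color `k`, the number of edges of color `k` incident with `v` has the same
parity as the degree of `v`. -/
def ParityBalanced {V : Type*} {m : ℕ} (X : SimpleGraph V) (c : Sym2 V → Fin m) : Prop :=
  ∀ (v : V) (k : Fin m), colorCountAt X c v k % 2 = deg X v % 2

/-- The edges of the sun centered at the constituent at `v`: the constituent edges
at `v` together with the matching edges incident with the cluster at `v`. -/
def sunEdges {V : Type*} (X : SimpleGraph V) (H : SimpleGraph X.Dart) (v : V) :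
    Set (Sym2 X.Dart) :=
  {e | e ∈ (trunc X H).edgeSet ∧ ∃ d : X.Dart, d ∈ e ∧ d.toProd.1 = v}

/-- `H` describes a cyclic truncation of `X`: it respects clusters and every
constituent is a cycle on its cluster. -/
def CyclicConstituents {V : Type*} (X : SimpleGraph V) (H : SimpleGraph X.Dart) : Prop :=
  RespectsClusters X H ∧ (∀ d : X.Dart, deg H d = 2) ∧
    ∀ v : V, (constituent X H v).Connected

section Aux

variable {V : Type*}

lemma myDartFinite [Finite V] (X : SimpleGraph V) : Finite X.Dart :=
  Finite.of_injective _ (SimpleGraph.Dart.toProd_injective)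

lemma even_card_invol {S : Type*} [DecidableEq S] (g : S → S)
    (hg : ∀ x, g (g x) = x) (hfix : ∀ x, g x ≠ x) :
    ∀ s : Finset S, (∀ x ∈ s, g x ∈ s) → Even s.card := by
  intro s
  induction s using Finset.strongInduction with
  | _ s ih =>
    intro hcl
    rcases s.eq_empty_or_nonempty with rfl | ⟨x, hx⟩
    · simp
    · have hgx : g x ∈ s := hcl x hx
      have hne : g x ≠ x := hfix x
      have hsub : ({x, g x} : Finset S) ⊆ s := by
        intro y hy
        simp only [Finset.mem_insert, Finset.mem_singleton] at hy
        rcases hy with rfl | rfl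
        exacts [hx, hgx]
      have htcl : ∀ y ∈ s \ {x, g x}, g y ∈ s \ {x, g x} := by
        intro y hy
        simp only [Finset.mem_sdiff, Finset.mem_insert, Finset.mem_singleton] at hy ⊢
        obtain ⟨hys, hy1⟩ := hy
        push_neg at hy1 ⊢
        refine ⟨hcl y hys, ?_, ?_⟩
        · intro h
          apply hy1.2
          rw [← hg y, h]
        · intro h
          apply hy1.1
          have := congrArg g h
          rwa [hg, hg] at this
      have hlt : s \ {x, g x} ⊂ s := by
        apply Finset.sdiff_ssubset hsub
        exact ⟨x, Finset.mem_insert_self _ _⟩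
      have h2 : ({x, g x} : Finset S).card = 2 := by
        rw [Finset.card_insert_of_notMem (by simpa using hne.symm), Finset.card_singleton]
      have hle : 2 ≤ s.card := h2 ▸ Finset.card_le_card hsub
      have hcard : s.card = (s \ {x, g x}).card + 2 := by
        rw [Finset.card_sdiff_of_subset hsub, h2]
        omega
      obtain ⟨m, hm⟩ := ih _ hlt htcl
      exact ⟨m + 1, by omega⟩

lemma proper_lb {W : Type*} [Finite W] (G : SimpleGraph W) (v : W) {k : ℕ}
    (C : Sym2 W → Fin k) (hC : IsProperEdgeColoring G C) : deg G v ≤ k := by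
  have hinj : Function.Injective (fun w : G.neighborSet v => C s(v, (w : W))) := by
    intro w1 w2 h
    by_contra hne
    have hne2 : (w1 : W) ≠ (w2 : W) := fun h' => hne (Subtype.ext h')
    exact hC s(v, (w1 : W)) w1.2 s(v, (w2 : W)) w2.2
      (fun he => hne2 (Sym2.congr_right.mp he))
      ⟨v, Sym2.mem_mk_left _ _, Sym2.mem_mk_left _ _⟩ h
  calc deg G v = Nat.card (G.neighborSet v) := (Nat.card_coe_set_eq _).symm
    _ ≤ Nat.card (Fin k) := Nat.card_le_card_of_injective _ hinj
    _ = k := by simp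

lemma chromIndex_eq_d {W : Type*} [Finite W] (G : SimpleGraph W) {d : ℕ} (hd : 0 < d)
    (v : W) (hv : deg G v = d) :
    chromIndex G = d ↔ ∃ C : Sym2 W → Fin d, IsProperEdgeColoring G C := by
  constructor
  · intro h
    have hne : {k | ∃ C : Sym2 W → Fin k, IsProperEdgeColoring G C}.Nonempty := by
      by_contra hemp
      rw [Set.not_nonempty_iff_eq_empty] at hemp
      have : chromIndex G = 0 := by rw [chromIndex, hemp, Nat.sInf_empty]
      omega
    have hmem := Nat.sInf_mem hne
    have h' : sInf {k | ∃ C : Sym2 W → Fin k, IsProperEdgeColoring G C} = d := h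
    rwa [h'] at hmem
  · rintro ⟨C, hC⟩
    refine le_antisymm (Nat.sInf_le ⟨C, hC⟩) ?_
    refine le_csInf ⟨d, C, hC⟩ ?_
    rintro k ⟨C', hC'⟩
    rw [← hv]
    exact proper_lb G v C' hC'

lemma completeTrunc_adj (X : SimpleGraph V) (x y : X.Dart) :
    (completeTrunc X).Adj x y ↔ x ≠ y ∧ (y = x.symm ∨ x.toProd.1 = y.toProd.1) := by
  simp only [completeTrunc, trunc, fromRel_adj]
  constructor
  · rintro ⟨hne, h⟩
    refine ⟨hne, ?_⟩
    rcases h with (h | ⟨-, h⟩) | (h | ⟨-, h⟩)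
    · exact Or.inl h
    · rcases h with h | h
      exacts [Or.inr h, Or.inr h.symm]
    · exact Or.inl (by rw [h, SimpleGraph.Dart.symm_symm])
    · rcases h with h | h
      exacts [Or.inr h.symm, Or.inr h]
  · rintro ⟨hne, h | h⟩
    · exact ⟨hne, Or.inl (Or.inl h)⟩
    · exact ⟨hne, Or.inl (Or.inr ⟨hne, Or.inl h⟩)⟩

lemma card_cluster_eq [Finite V] (X : SimpleGraph V) (v : V) :
    Nat.card {z : X.Dart // z.toProd.1 = v} = deg X v := by
  have e : {z : X.Dart // z.toProd.1 = v} ≃ X.neighborSet v :=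
    { toFun := fun z => ⟨z.1.toProd.2, by
        have := z.1.adj
        rw [z.2] at this
        exact this⟩
      invFun := fun w => ⟨⟨(v, w.1), w.2⟩, rfl⟩
      left_inv := fun z => by
        apply Subtype.ext
        apply SimpleGraph.Dart.ext
        exact Prod.ext z.2.symm rfl
      right_inv := fun w => rfl }
  rw [Nat.card_congr e, Nat.card_coe_set_eq]
  rfl

lemma TR_neighborSet (X : SimpleGraph V) (z : X.Dart) :
    (completeTrunc X).neighborSet z
      = insert z.symm ({y : X.Dart | y.toProd.1 = z.toProd.1} \ {z}) := by
  ext y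
  simp only [mem_neighborSet, completeTrunc_adj, Set.mem_insert_iff, Set.mem_diff,
    Set.mem_setOf_eq, Set.mem_singleton_iff]
  constructor
  · rintro ⟨hne, h | h⟩
    · exact Or.inl h
    · exact Or.inr ⟨h.symm, Ne.symm hne⟩
  · rintro (rfl | ⟨h, hne⟩)
    · exact ⟨(SimpleGraph.Dart.symm_ne z).symm, Or.inl rfl⟩
    · exact ⟨Ne.symm hne, Or.inr h.symm⟩

lemma TR_deg [Finite V] (X : SimpleGraph V) {d : ℕ} (hreg : ∀ v, deg X v = d)
    (hd : 0 < d) (z : X.Dart) : deg (completeTrunc X) z = d := by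
  haveI := myDartFinite X
  rw [deg, TR_neighborSet]
  have h1 : z.symm ∉ ({y : X.Dart | y.toProd.1 = z.toProd.1} \ {z}) := by
    rintro ⟨h, -⟩
    exact z.snd_ne_fst h
  have hmem : z ∈ {y : X.Dart | y.toProd.1 = z.toProd.1} := rfl
  have hc : ({y : X.Dart | y.toProd.1 = z.toProd.1}).ncard = d := by
    rw [← Nat.card_coe_set_eq]
    rw [show Nat.card {y : X.Dart | y.toProd.1 = z.toProd.1}
        = Nat.card {y : X.Dart // y.toProd.1 = z.toProd.1} from rfl]
    rw [card_cluster_eq X z.toProd.1, hreg]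
  rw [Set.ncard_insert_of_notMem h1 (Set.toFinite _),
    Set.ncard_diff_singleton_of_mem hmem, hc]
  omega

end Aux

section Aux2

variable {V : Type*}

lemma unique_color {W : Type*} {α : Type*} (G : SimpleGraph W) (C : Sym2 W → α)
    (hC : IsProperEdgeColoring G C) {z y1 y2 : W} (h1 : G.Adj z y1) (h2 : G.Adj z y2)
    (hc : C s(z, y1) = C s(z, y2)) : y1 = y2 := by
  by_contra hne
  exact hC s(z, y1) h1 s(z, y2) h2 (fun he => hne (Sym2.congr_right.mp he))
    ⟨z, Sym2.mem_mk_left _ _, Sym2.mem_mk_left _ _⟩ hc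

lemma all_colors [Finite V] (X : SimpleGraph V) {d : ℕ} (hd : 0 < d)
    (hreg : ∀ v, deg X v = d) (C : Sym2 X.Dart → Fin d)
    (hC : IsProperEdgeColoring (completeTrunc X) C) (z : X.Dart) (k : Fin d) :
    ∃ y, (completeTrunc X).Adj z y ∧ C s(z, y) = k := by
  haveI := myDartFinite X
  have hinj : Function.Injective
      (fun y : (completeTrunc X).neighborSet z => C s(z, (y : X.Dart))) := by
    intro y1 y2 h
    exact Subtype.ext (unique_color (completeTrunc X) C hC y1.2 y2.2 h)
  have hcard : Nat.card ((completeTrunc X).neighborSet z) = d := by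
    rw [Nat.card_coe_set_eq]
    exact TR_deg X hreg hd z
  have hbij : Function.Bijective
      (fun y : (completeTrunc X).neighborSet z => C s(z, (y : X.Dart))) :=
    (Nat.bijective_iff_injective_and_card _).mpr ⟨hinj, by simp [hcard]⟩
  obtain ⟨y, hy⟩ := hbij.2 k
  exact ⟨y, y.2, hy⟩

lemma surj_matching [Finite V] (X : SimpleGraph V) {d : ℕ} (hd : Odd d)
    (hreg : ∀ v, deg X v = d) (C : Sym2 X.Dart → Fin d)
    (hC : IsProperEdgeColoring (completeTrunc X) C) (v : V) (k : Fin d) :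
    ∃ z : X.Dart, z.toProd.1 = v ∧ C s(z, z.symm) = k := by
  by_contra hno
  push_neg at hno
  classical
  haveI := myDartFinite X
  have hpos : 0 < d := hd.pos
  have key : ∀ z : X.Dart, z.toProd.1 = v → ∃ y : X.Dart,
      y.toProd.1 = v ∧ (completeTrunc X).Adj z y ∧ C s(z, y) = k := by
    intro z hz
    obtain ⟨y, hyadj, hyc⟩ := all_colors X hpos hreg C hC z k
    rcases (completeTrunc_adj X z y).mp hyadj with ⟨hne, h | h⟩
    · exfalso
      rw [h] at hyc
      exact hno z hz hyc
    · exact ⟨y, h.symm.trans hz, hyadj, hyc⟩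
  set g : {z : X.Dart // z.toProd.1 = v} → {z : X.Dart // z.toProd.1 = v} :=
    fun z => ⟨(key z.1 z.2).choose, (key z.1 z.2).choose_spec.1⟩ with hgdef
  have hgadj : ∀ z, (completeTrunc X).Adj z.1 (g z).1 ∧ C s(z.1, (g z).1) = k :=
    fun z => ⟨(key z.1 z.2).choose_spec.2.1, (key z.1 z.2).choose_spec.2.2⟩
  have hginv : ∀ z, g (g z) = z := by
    intro z
    have h1 := hgadj z
    have h2 := hgadj (g z)
    apply Subtype.ext
    apply unique_color (completeTrunc X) C hC h2.1 h1.1.symm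
    rw [h2.2, ← h1.2, Sym2.eq_swap]
  have hgfix : ∀ z, g z ≠ z := by
    intro z h
    have hadj := (hgadj z).1
    rw [h] at hadj
    exact (completeTrunc X).loopless.irrefl z.1 hadj
  have heven : Even (Nat.card {z : X.Dart // z.toProd.1 = v}) := by
    haveI : Fintype {z : X.Dart // z.toProd.1 = v} := Fintype.ofFinite _
    rw [Nat.card_eq_fintype_card, ← Finset.card_univ]
    exact even_card_invol g hginv hgfix Finset.univ (fun x _ => Finset.mem_univ _)
  rw [card_cluster_eq X v, hreg v] at heven
  exact (Nat.not_even_iff_odd.mpr hd) heven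

end Aux2

section Aux3

variable {V : Type*}

lemma good_of_TR [Finite V] (X : SimpleGraph V) {d : ℕ} (hd : Odd d)
    (hreg : ∀ v, deg X v = d) (C : Sym2 X.Dart → Fin d)
    (hC : IsProperEdgeColoring (completeTrunc X) C) :
    ∃ c : Sym2 V → Fin d, IsProperEdgeColoring X c := by
  haveI : NeZero d := ⟨hd.pos.ne'⟩
  haveI := myDartFinite X
  classical
  set f : V → V → Fin d := fun p q =>
    if h : X.Adj p q then C s(⟨(p, q), h⟩, SimpleGraph.Dart.symm ⟨(p, q), h⟩) else 0 with hfdef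
  have hfsymm : ∀ p q, f p q = f q p := by
    intro p q
    by_cases h : X.Adj p q
    · rw [hfdef]
      simp only [dif_pos h, dif_pos h.symm]
      have e1 : SimpleGraph.Dart.symm (⟨(p, q), h⟩ : X.Dart) = ⟨(q, p), h.symm⟩ := rfl
      have e2 : SimpleGraph.Dart.symm (⟨(q, p), h.symm⟩ : X.Dart) = ⟨(p, q), h⟩ := rfl
      rw [e1, e2, Sym2.eq_swap]
    · rw [hfdef]
      simp only [dif_neg h, dif_neg (fun h' : X.Adj q p => h h'.symm)]
  refine ⟨Sym2.lift ⟨f, hfsymm⟩, ?_⟩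
  have hinj : ∀ v : V, ∀ z1 z2 : X.Dart, z1.toProd.1 = v → z2.toProd.1 = v →
      C s(z1, z1.symm) = C s(z2, z2.symm) → z1 = z2 := by
    intro v z1 z2 h1 h2 hcc
    set m : {z : X.Dart // z.toProd.1 = v} → Fin d := fun z => C s(z.1, z.1.symm) with hm
    have hsurj : Function.Surjective m := by
      intro k
      obtain ⟨z, hz, hck⟩ := surj_matching X hd hreg C hC v k
      exact ⟨⟨z, hz⟩, hck⟩
    have hbij : Function.Bijective m :=
      (Nat.bijective_iff_surjective_and_card m).mpr
        ⟨hsurj, by rw [card_cluster_eq X v, hreg v]; simp⟩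
    have := hbij.1 (a₁ := ⟨z1, h1⟩) (a₂ := ⟨z2, h2⟩) hcc
    exact congrArg Subtype.val this
  rintro e1 he1 e2 he2 hne ⟨v, hv1, hv2⟩
  have he1' : s(v, Sym2.Mem.other hv1) = e1 := Sym2.other_spec hv1
  have he2' : s(v, Sym2.Mem.other hv2) = e2 := Sym2.other_spec hv2
  set w1 := Sym2.Mem.other hv1
  set w2 := Sym2.Mem.other hv2
  have hadj1 : X.Adj v w1 := by rw [← he1'] at he1; exact he1
  have hadj2 : X.Adj v w2 := by rw [← he2'] at he2; exact he2
  rw [← he1', ← he2', Sym2.lift_mk, Sym2.lift_mk]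
  simp only [hfdef, dif_pos hadj1, dif_pos hadj2]
  intro hcc
  have := hinj v ⟨(v, w1), hadj1⟩ ⟨(v, w2), hadj2⟩ rfl rfl hcc
  apply hne
  rw [← he1', ← he2']
  have : w1 = w2 := congrArg (fun z : X.Dart => z.toProd.2) this
  rw [this]

lemma good_to_TR [Finite V] (X : SimpleGraph V) {d : ℕ} (hd : Odd d)
    (c : Sym2 V → Fin d) (hc : IsProperEdgeColoring X c) :
    ∃ C : Sym2 X.Dart → Fin d, IsProperEdgeColoring (completeTrunc X) C := by
  haveI : NeZero d := ⟨hd.pos.ne'⟩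
  classical
  set a : X.Dart → ZMod d := fun z => ((c z.edge : Fin d) : ℕ) with hadef
  have ha_symm : ∀ z : X.Dart, a z.symm = a z := by
    intro z
    rw [hadef]
    simp only [SimpleGraph.Dart.edge_symm]
  have ha_inj : ∀ z y : X.Dart, z.toProd.1 = y.toProd.1 → a z = a y → z = y := by
    intro z y hfst h
    by_contra hne
    have hcast : c z.edge = c y.edge := by
      apply Fin.ext
      have := congrArg ZMod.val h
      rwa [ZMod.val_cast_of_lt (c z.edge).2, ZMod.val_cast_of_lt (c y.edge).2] at this
    have hedge : z.edge ≠ y.edge := by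
      intro he
      rcases (dart_edge_eq_iff z y).mp he with h' | h'
      · exact hne h'
      · have : z.toProd.1 = y.toProd.2 := by rw [h']; rfl
        exact y.fst_ne_snd (hfst.symm.trans this)
    have hz1 : z.toProd.1 ∈ z.edge := Sym2.mem_mk_left _ _
    have hz2 : z.toProd.1 ∈ y.edge := by
      rw [hfst]; exact Sym2.mem_mk_left _ _
    exact hc z.edge z.edge_mem y.edge y.edge_mem hedge ⟨z.toProd.1, hz1, hz2⟩ hcast
  set u : (ZMod d)ˣ := ZMod.unitOfCoprime 2 (Nat.coprime_two_left.mpr hd) with hu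
  have hu2 : (u : ZMod d) = 2 := by
    rw [hu, ZMod.coe_unitOfCoprime]
    norm_cast
  set F : X.Dart → X.Dart → ZMod d :=
    fun x y => if y = x.symm then a x else (↑u⁻¹ : ZMod d) * (a x + a y) with hFdef
  have hF : ∀ x y, F x y = F y x := by
    intro x y
    by_cases h : y = x.symm
    · have h' : x = y.symm := by rw [h, SimpleGraph.Dart.symm_symm]
      rw [hFdef]
      simp only [if_pos h, if_pos h']
      rw [h, ha_symm]
    · have h' : x ≠ y.symm := fun hx => h (by rw [hx, SimpleGraph.Dart.symm_symm])
      rw [hFdef]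
      simp only [if_neg h, if_neg h']
      rw [add_comm]
  set F2 : Sym2 X.Dart → ZMod d := Sym2.lift ⟨F, hF⟩ with hF2
  set ρ : ZMod d → Fin d := fun x => ⟨x.val, ZMod.val_lt x⟩ with hρ
  have hρinj : Function.Injective ρ := by
    intro x y h
    exact ZMod.val_injective d (congrArg Fin.val h)
  refine ⟨fun e => ρ (F2 e), ?_⟩
  rintro e1 he1 e2 he2 hne ⟨z, hz1, hz2⟩
  intro hcc
  have hF2cc : F2 e1 = F2 e2 := hρinj hcc
  have he1' : s(z, Sym2.Mem.other hz1) = e1 := Sym2.other_spec hz1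
  have he2' : s(z, Sym2.Mem.other hz2) = e2 := Sym2.other_spec hz2
  set x := Sym2.Mem.other hz1
  set y := Sym2.Mem.other hz2
  have hadj1 : (completeTrunc X).Adj z x := by rw [← he1'] at he1; exact he1
  have hadj2 : (completeTrunc X).Adj z y := by rw [← he2'] at he2; exact he2
  have hxy : x ≠ y := by
    intro h
    apply hne
    rw [← he1', ← he2', h]
  rw [← he1', ← he2', hF2, Sym2.lift_mk, Sym2.lift_mk] at hF2cc
  have hF2cc' : F z x = F z y := hF2cc
  have hnsymm : ∀ w : X.Dart, z.toProd.1 = w.toProd.1 → w ≠ z.symm := by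
    intro w hw h
    rw [h] at hw
    exact z.fst_ne_snd hw
  have hkey : ∀ w : X.Dart, z.toProd.1 = w.toProd.1 → z ≠ w →
      a z = (↑u⁻¹ : ZMod d) * (a z + a w) → False := by
    intro w hw hzw heq
    have h1 : (u : ZMod d) * a z = (u : ZMod d) * ((↑u⁻¹ : ZMod d) * (a z + a w)) :=
      congrArg (fun t => (u : ZMod d) * t) heq
    rw [← mul_assoc, Units.mul_inv, one_mul, hu2, two_mul] at h1
    exact hzw (ha_inj z w hw (add_left_cancel h1))
  rcases (completeTrunc_adj X z x).mp hadj1 with ⟨hzx, hx | hx⟩ <;>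
    rcases (completeTrunc_adj X z y).mp hadj2 with ⟨hzy, hy | hy⟩
  · exact hxy (hx.trans hy.symm)
  · rw [hFdef] at hF2cc'
    simp only [if_pos hx, if_neg (hnsymm y hy)] at hF2cc'
    exact hkey y hy hzy hF2cc'
  · rw [hFdef] at hF2cc'
    simp only [if_pos hy, if_neg (hnsymm x hx)] at hF2cc'
    exact hkey x hx hzx hF2cc'.symm
  · rw [hFdef] at hF2cc'
    simp only [if_neg (hnsymm x hx), if_neg (hnsymm y hy)] at hF2cc'
    have h1 : (u : ZMod d) * ((↑u⁻¹ : ZMod d) * (a z + a x))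
        = (u : ZMod d) * ((↑u⁻¹ : ZMod d) * (a z + a y)) :=
      congrArg (fun t => (u : ZMod d) * t) hF2cc'
    rw [← mul_assoc, Units.mul_inv, one_mul, ← mul_assoc, Units.mul_inv, one_mul] at h1
    exact hxy (ha_inj x y (hx.symm.trans hy) (add_left_cancel h1))

end Aux3

/-- a `d`-regular graph with `d` odd is class I iff its complete
truncation is class I. -/
theorem stmt6 {V : Type*} [Fintype V] (X : SimpleGraph V) (d : ℕ) (hd : Odd d)
    (hreg : ∀ v, deg X v = d) :
    chromIndex X = d ↔ chromIndex (completeTrunc X) = d := by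
  classical
  haveI : Finite V := Finite.of_fintype V
  haveI := myDartFinite X
  have hpos : 0 < d := hd.pos
  rcases isEmpty_or_nonempty V with hV | hV
  · haveI : IsEmpty X.Dart := ⟨fun z => IsEmpty.false z.toProd.1⟩
    have hzero : ∀ {W : Type} (G : SimpleGraph W), True := fun _ => trivial
    have hX : chromIndex X = 0 := by
      have hmem : (0 : ℕ) ∈ {k | ∃ C : Sym2 V → Fin k, IsProperEdgeColoring X C} :=
        ⟨fun e => isEmptyElim e, fun e _ => isEmptyElim e⟩
      exact Nat.le_zero.mp (Nat.sInf_le hmem)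
    have hTR : chromIndex (completeTrunc X) = 0 := by
      have hmem : (0 : ℕ) ∈ {k | ∃ C : Sym2 X.Dart → Fin k,
          IsProperEdgeColoring (completeTrunc X) C} :=
        ⟨fun e => isEmptyElim e, fun e _ => isEmptyElim e⟩
      exact Nat.le_zero.mp (Nat.sInf_le hmem)
    rw [hX, hTR]
  · obtain ⟨v⟩ := hV
    have hnb : (X.neighborSet v).Nonempty := by
      rw [← Set.ncard_pos (Set.toFinite _)]
      have := hreg v
      rw [deg] at this
      omega
    obtain ⟨w, hw⟩ := hnb
    set z : X.Dart := ⟨(v, w), hw⟩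
    rw [chromIndex_eq_d X hpos v (hreg v),
      chromIndex_eq_d (completeTrunc X) hpos z (TR_deg X hreg hpos z)]
    constructor
    · rintro ⟨c, hc⟩
      exact good_to_TR X hd c hc
    · rintro ⟨C, hC⟩
      exact good_of_TR X hd hreg C hC
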